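/- Let Z be positive definite with extremal eigenvalues a ≥ b > 0, and let ℰ be a subspace. Then (Z_ℰ)² ≥ (4ab/(a+b)²) · (Z²)_ℰ in the Loewner order on ℰ. -/

import Mathlib

open scoped ComplexOrder
open Matrix


lemma aux_smul_psd {m : ℕ} {M : Matrix (Fin m) (Fin m) ℂ} (hM : M.PosSemidef)
    {r : ℝ} (hr : 0 ≤ r) : (r • M).PosSemidef := by
  constructor
  · simp [Matrix.IsHermitian, Matrix.conjTranspose_smul, hM.1.eq]
  · intro x
    exact (hM.smul hr).2 x

/-- The subspace `ℰ` is represented by an isometry `V` whose columns form an orthonormal basis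
of `ℰ`, so the compression `X_ℰ` is `Vᴴ * X * V`. -/
theorem stmt_12 (n k : ℕ) (Z : Matrix (Fin n) (Fin n) ℂ) (hZ : Z.PosDef) (a b : ℝ)
    (ha : ∀ i, hZ.1.eigenvalues i ≤ a) (ha' : ∃ i, hZ.1.eigenvalues i = a)
    (hb : ∀ i, b ≤ hZ.1.eigenvalues i) (hb' : ∃ i, hZ.1.eigenvalues i = b)
    (V : Matrix (Fin n) (Fin k) ℂ) (hV : Vᴴ * V = 1) (hk : 0 < k) :
    ((Vᴴ * Z * V) ^ 2 - (4 * a * b / (a + b) ^ 2 : ℝ) • (Vᴴ * Z ^ 2 * V)).PosSemidef := by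

  obtain ⟨i0, hi0⟩ := hb'
  have hb0 : 0 < b := hi0 ▸ hZ.eigenvalues_pos i0
  obtain ⟨j0, hj0⟩ := ha'
  have hba : b ≤ a := hj0 ▸ hb j0
  have ha0 : 0 < a := lt_of_lt_of_le hb0 hba
  have hab0 : (0:ℝ) < a + b := by linarith
  set c : ℝ := 4 * a * b / (a + b) ^ 2 with hc
  set t : ℝ := 2 * a * b / (a + b) with ht
  have hc0 : (0:ℝ) ≤ c := by positivity
  have hH := hZ.1
  set U : Matrix (Fin n) (Fin n) ℂ := (hH.eigenvectorUnitary : Matrix (Fin n) (Fin n) ℂ) with hU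
  have hUU : U * Uᴴ = 1 := by
    simpa [Matrix.star_eq_conjTranspose] using (Matrix.mem_unitaryGroup_iff).mp hH.eigenvectorUnitary.2
  have hUU' : Uᴴ * U = 1 := by
    simpa [Matrix.star_eq_conjTranspose] using (Matrix.mem_unitaryGroup_iff').mp hH.eigenvectorUnitary.2
  set D : Matrix (Fin n) (Fin n) ℂ := diagonal (RCLike.ofReal ∘ hH.eigenvalues) with hD
  have hspec : Z = U * D * Uᴴ := by
    rw [hU, hD]
    simpa [Matrix.star_eq_conjTranspose] using hH.spectral_theorem
  set W : Matrix (Fin n) (Fin n) ℂ := (a + b) • Z - (a * b) • 1 - Z ^ 2 with hW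
  have hWeq : W = U * ((a + b) • D - (a * b) • 1 - D * D) * Uᴴ := by
    have hZ2 : Z ^ 2 = U * (D * D) * Uᴴ := by
      rw [pow_two, hspec]
      calc U * D * Uᴴ * (U * D * Uᴴ) = U * (D * ((Uᴴ * U) * (D * Uᴴ))) := by
            simp only [Matrix.mul_assoc]
        _ = U * (D * D) * Uᴴ := by rw [hUU']; simp [Matrix.mul_assoc]
    symm
    simp only [Matrix.mul_sub, Matrix.sub_mul, Matrix.smul_mul, Matrix.mul_smul]
    rw [Matrix.mul_one, hUU, ← hspec, ← hZ2, ← hW]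
  have hWps : W.PosSemidef := by
    rw [hWeq]
    apply Matrix.PosSemidef.mul_mul_conjTranspose_same
    have : (a + b) • D - (a * b) • (1 : Matrix (Fin n) (Fin n) ℂ) - D * D =
        diagonal (fun i => (((a + b) * hH.eigenvalues i - a * b - hH.eigenvalues i ^ 2 : ℝ) : ℂ)) := by
      rw [hD, diagonal_mul_diagonal, ← Matrix.diagonal_one, ← Matrix.diagonal_smul,
        ← Matrix.diagonal_smul, Matrix.diagonal_sub, Matrix.diagonal_sub]
      ext i j
      by_cases h : i = j <;> simp [h, Function.comp, Complex.real_smul] <;> push_cast <;> ring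
    rw [this]
    apply Matrix.PosSemidef.diagonal
    intro i
    have h1 := ha i
    have h2 := hb i
    have : (0:ℝ) ≤ (a + b) * hH.eigenvalues i - a * b - hH.eigenvalues i ^ 2 := by nlinarith
    simpa using (Complex.zero_le_real).2 this
  set C : Matrix (Fin k) (Fin k) ℂ := Vᴴ * Z * V with hCdef
  have hCps : C.PosSemidef := hZ.posSemidef.conjTranspose_mul_mul_same V
  have hCherm : (C - t • 1).IsHermitian := by
    simp [Matrix.IsHermitian, Matrix.conjTranspose_sub, Matrix.conjTranspose_smul, hCps.1.eq]
  have hsq : ((C - t • 1) ^ 2).PosSemidef := by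
    have h := Matrix.posSemidef_conjTranspose_mul_self (C - t • 1)
    rwa [hCherm.eq, ← pow_two] at h
  have hcomp : (c • (Vᴴ * W * V)).PosSemidef := by
    have h := (aux_smul_psd hWps hc0).conjTranspose_mul_mul_same V
    have e : Vᴴ * (c • W) * V = c • (Vᴴ * W * V) := by
      rw [Matrix.mul_smul, Matrix.smul_mul]
    rwa [e] at h
  have hVWV : Vᴴ * W * V = (a + b) • C - (a * b) • 1 - Vᴴ * Z ^ 2 * V := by
    rw [hW]
    simp only [Matrix.mul_sub, Matrix.sub_mul, Matrix.mul_smul, Matrix.smul_mul, Matrix.mul_one]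
    rw [hV]
  have expand : (C - t • (1 : Matrix (Fin k) (Fin k) ℂ)) ^ 2
      = C ^ 2 - (2 * t) • C + (t ^ 2) • 1 := by
    rw [pow_two]
    simp only [Matrix.sub_mul, Matrix.mul_sub, Matrix.smul_mul, Matrix.mul_smul, smul_smul,
      Matrix.mul_one, Matrix.one_mul]
    rw [← pow_two C]
    module
  have key : C ^ 2 - c • (Vᴴ * Z ^ 2 * V) = (C - t • 1) ^ 2 + c • (Vᴴ * W * V) := by
    rw [hVWV, expand, smul_sub, smul_sub, smul_smul, smul_smul]
    have e1 : c * (a + b) = 2 * t := by rw [hc, ht]; field_simp; ring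
    have e2 : c * (a * b) = t ^ 2 := by rw [hc, ht]; field_simp; ring
    rw [e1, e2]
    abel
  rw [key]
  exact hsq.add hcomp
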